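/- Let Ω ⊂ ℂ be a domain and w ∈ L²_loc(Ω) with w ≥ 0 a.e. Suppose there is a constant C₀ > 0 such that for every disk D(z₀,r) with D(z₀,2r) ⊂ Ω one has the reverse Hölder inequality ( (1/r²) ∫_{D(z₀,r)} w² )^{1/2} ≤ (C₀/r²) ∫_{D(z₀,r)} w. Then either w = 0 a.e. in Ω or w > 0 a.e. in Ω. -/

import Mathlib

open MeasureTheory Metric

open Filter Set in
/-- Cauchy–Schwarz on a set of finite measure. -/
private lemma cs_aux {s : Set ℂ} (hfin : volume s ≠ ⊤)
    {w : ℂ → ℝ}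
    (h2 : IntegrableOn (fun z => w z ^ 2) s volume)
    (hm : AEStronglyMeasurable w (volume.restrict s))
    (hnn : 0 ≤ᵐ[volume.restrict s] w) :
    ∫ z in s, w z ≤ Real.sqrt (∫ z in s, w z ^ 2) * Real.sqrt ((volume s).toReal) := by
  haveI : IsFiniteMeasure (volume.restrict s) := by
    constructor
    rw [Measure.restrict_apply_univ]
    exact lt_top_iff_ne_top.2 hfin
  have h2' : ENNReal.ofReal (2 : ℝ) = 2 := by
    rw [ENNReal.ofReal_ofNat]
  have hmem : MemLp w (ENNReal.ofReal (2:ℝ)) (volume.restrict s) := by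
    rw [h2']
    exact (memLp_two_iff_integrable_sq hm).2 h2
  have hone : MemLp (fun _ : ℂ => (1 : ℝ)) (ENNReal.ofReal (2:ℝ)) (volume.restrict s) := by
    rw [h2']; exact memLp_const 1
  have hpq : Real.HolderConjugate 2 2 := Real.HolderConjugate.two_two
  have h := MeasureTheory.integral_mul_le_Lp_mul_Lq_of_nonneg hpq hnn
      (Filter.Eventually.of_forall fun _ => zero_le_one) hmem hone
  have hr2 : ∀ x : ℝ, x ^ (2:ℝ) = x ^ 2 := fun x => by
    rw [show (2:ℝ) = ((2:ℕ):ℝ) by norm_num, Real.rpow_natCast]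
  simp only [mul_one, hr2, one_pow] at h
  rw [setIntegral_const, smul_eq_mul, mul_one] at h
  rw [Real.sqrt_eq_rpow, Real.sqrt_eq_rpow]
  exact h

open Filter Set in
/-- Key lemma: if `w` vanishes a.e. on a measurable set `Z` occupying all but a
quantitatively small part of a ball, then `w` vanishes a.e. on the whole ball. -/
private lemma zero_on_ball {Ω : Set ℂ} {w : ℂ → ℝ}
    (hw2 : LocallyIntegrableOn (fun z => (w z) ^ 2) Ω volume)
    (hw1 : LocallyIntegrableOn w Ω volume)
    (hnn : ∀ᵐ z ∂volume, z ∈ Ω → 0 ≤ w z)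
    {C₀ : ℝ} (hC₀ : 0 < C₀)
    (hRH : ∀ z₀ : ℂ, ∀ r : ℝ, 0 < r → ball z₀ (2 * r) ⊆ Ω →
      Real.sqrt ((1 / r ^ 2) * ∫ z in ball z₀ r, (w z) ^ 2) ≤
        (C₀ / r ^ 2) * ∫ z in ball z₀ r, w z)
    {z₀ : ℂ} {r : ℝ} (hr : 0 < r) (hball : ball z₀ (2 * r) ⊆ Ω)
    {Z : Set ℂ} (hZm : MeasurableSet Z)
    (hZ0 : ∀ᵐ z ∂volume, z ∈ Z → w z = 0)
    (hsmall : C₀ ^ 2 * (volume (ball z₀ r \ Z)).toReal < r ^ 2) :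
    ∀ᵐ z ∂volume, z ∈ ball z₀ r → w z = 0 := by
  set B := ball z₀ r with hB
  have hBΩ : B ⊆ Ω := (ball_subset_ball (by linarith)).trans hball
  have hcB : closedBall z₀ r ⊆ Ω := (closedBall_subset_ball (by linarith)).trans hball
  have hint1 : IntegrableOn w B volume :=
    (hw1.integrableOn_compact_subset hcB (isCompact_closedBall _ _)).mono_set
      ball_subset_closedBall
  have hint2 : IntegrableOn (fun z => w z ^ 2) B volume :=
    (hw2.integrableOn_compact_subset hcB (isCompact_closedBall _ _)).mono_set
      ball_subset_closedBall
  have hnnB : 0 ≤ᵐ[volume.restrict B] w := by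
    filter_upwards [ae_restrict_of_ae hnn, ae_restrict_mem measurableSet_ball] with x h1 h2
    exact h1 (hBΩ h2)
  set I := ∫ z in B, w z with hI
  have hI0 : 0 ≤ I := integral_nonneg_of_ae hnnB
  -- the integral over B ∩ Z vanishes
  have hzero : ∫ z in B ∩ Z, w z = 0 := by
    apply integral_eq_zero_of_ae
    filter_upwards [ae_restrict_of_ae hZ0, ae_restrict_mem (measurableSet_ball.inter hZm)]
      with x h1 h2
    exact h1 h2.2
  have hsplit := integral_inter_add_diff (μ := volume) (s := B) (t := Z) hZm hint1
  have hIeq : I = ∫ z in B \ Z, w z := by rw [hI, ← hsplit, hzero, zero_add]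
  -- Cauchy–Schwarz on B \ Z
  set v := (volume (B \ Z)).toReal with hv
  have hv0 : 0 ≤ v := ENNReal.toReal_nonneg
  have hfin : volume (B \ Z) ≠ ⊤ :=
    ((measure_mono diff_subset).trans_lt measure_ball_lt_top).ne
  have hcs : ∫ z in B \ Z, w z ≤
      Real.sqrt (∫ z in B \ Z, w z ^ 2) * Real.sqrt v := by
    apply cs_aux hfin (hint2.mono_set diff_subset)
      (hint1.1.mono_measure (Measure.restrict_mono diff_subset le_rfl))
    exact ae_restrict_of_ae_restrict_of_subset diff_subset hnnB
  have hmono : ∫ z in B \ Z, w z ^ 2 ≤ ∫ z in B, w z ^ 2 := by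
    apply setIntegral_mono_set hint2
    · exact Filter.Eventually.of_forall fun x => sq_nonneg _
    · exact HasSubset.Subset.eventuallyLE diff_subset
  -- reverse Hölder
  have hrh := hRH z₀ r hr hball
  have hJ0 : 0 ≤ ∫ z in B, w z ^ 2 :=
    integral_nonneg_of_ae (Filter.Eventually.of_forall fun x => sq_nonneg _)
  have hsqrtJ : Real.sqrt (∫ z in B, w z ^ 2) ≤ (C₀ / r) * I := by
    have h1 : Real.sqrt ((1 / r ^ 2) * ∫ z in B, w z ^ 2)
        = (1 / r) * Real.sqrt (∫ z in B, w z ^ 2) := by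
      have hsq : Real.sqrt (1 / r ^ 2) = 1 / r := by
        rw [one_div, Real.sqrt_inv, Real.sqrt_sq hr.le, one_div]
      rw [Real.sqrt_mul (by positivity), hsq]
    rw [h1] at hrh
    have := mul_le_mul_of_nonneg_left hrh hr.le
    calc Real.sqrt (∫ z in B, w z ^ 2)
        = r * ((1 / r) * Real.sqrt (∫ z in B, w z ^ 2)) := by
          field_simp
      _ ≤ r * ((C₀ / r ^ 2) * I) := this
      _ = (C₀ / r) * I := by field_simp
  -- combine
  have hIle : I ≤ (C₀ / r) * I * Real.sqrt v := by
    calc I = ∫ z in B \ Z, w z := hIeq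
      _ ≤ Real.sqrt (∫ z in B \ Z, w z ^ 2) * Real.sqrt v := hcs
      _ ≤ Real.sqrt (∫ z in B, w z ^ 2) * Real.sqrt v := by
          apply mul_le_mul_of_nonneg_right (Real.sqrt_le_sqrt hmono) (Real.sqrt_nonneg _)
      _ ≤ (C₀ / r) * I * Real.sqrt v := by
          apply mul_le_mul_of_nonneg_right _ (Real.sqrt_nonneg _)
          exact hsqrtJ
  have hlt : C₀ * Real.sqrt v < r := by
    have h1 : (C₀ * Real.sqrt v) ^ 2 < r ^ 2 := by
      have : Real.sqrt v ^ 2 = v := Real.sq_sqrt hv0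
      nlinarith [Real.sqrt_nonneg v]
    nlinarith [Real.sqrt_nonneg v, mul_nonneg hC₀.le (Real.sqrt_nonneg v)]
  have hIzero : I = 0 := by
    have hcoef : C₀ / r * Real.sqrt v < 1 := by
      rw [div_mul_eq_mul_div, div_lt_one hr]
      exact hlt
    nlinarith [mul_nonneg hI0 (sub_nonneg.2 hcoef.le)]
  -- conclude
  have hae : w =ᵐ[volume.restrict B] 0 := by
    rw [hI] at hIzero
    exact (integral_eq_zero_iff_of_nonneg_ae hnnB hint1).1 hIzero
  exact (ae_restrict_iff' measurableSet_ball).1 hae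

open Filter Set in
/-- Growth lemma: the a.e. zero set grows from a ball to a slightly larger concentric ball. -/
private lemma grow {Ω : Set ℂ} {w : ℂ → ℝ}
    (hw2 : LocallyIntegrableOn (fun z => (w z) ^ 2) Ω volume)
    (hw1 : LocallyIntegrableOn w Ω volume)
    (hnn : ∀ᵐ z ∂volume, z ∈ Ω → 0 ≤ w z)
    {C₀ : ℝ} (hC₀ : 0 < C₀)
    (hRH : ∀ z₀ : ℂ, ∀ r : ℝ, 0 < r → ball z₀ (2 * r) ⊆ Ω →
      Real.sqrt ((1 / r ^ 2) * ∫ z in ball z₀ r, (w z) ^ 2) ≤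
        (C₀ / r ^ 2) * ∫ z in ball z₀ r, w z)
    {a : ℂ} {ρ ρ' : ℝ} (hρ : 0 < ρ) (hρ' : ρ < ρ')
    (hcond : C₀ ^ 2 * ((ρ' ^ 2 - ρ ^ 2) * Real.pi) < ρ' ^ 2)
    (hin : ball a (2 * ρ') ⊆ Ω)
    (h0 : ∀ᵐ z ∂volume, z ∈ ball a ρ → w z = 0) :
    ∀ᵐ z ∂volume, z ∈ ball a ρ' → w z = 0 := by
  apply zero_on_ball hw2 hw1 hnn hC₀ hRH (hρ.trans hρ') hin measurableSet_ball h0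
  have hvol : (volume (ball a ρ' \ ball a ρ)).toReal = (ρ' ^ 2 - ρ ^ 2) * Real.pi := by
    rw [measure_diff (ball_subset_ball hρ'.le) measurableSet_ball.nullMeasurableSet
      measure_ball_lt_top.ne, Complex.volume_ball, Complex.volume_ball,
      ENNReal.toReal_sub_of_le]
    · rw [ENNReal.toReal_mul, ENNReal.toReal_mul, ENNReal.toReal_pow, ENNReal.toReal_pow,
        ENNReal.toReal_ofReal hρ.le, ENNReal.toReal_ofReal (hρ.trans hρ').le,
        ENNReal.coe_toReal, NNReal.coe_real_pi]
      ring
    · gcongr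
    · exact ENNReal.mul_ne_top (ENNReal.pow_ne_top ENNReal.ofReal_ne_top) ENNReal.coe_ne_top
  rw [hvol]
  exact hcond

set_option maxHeartbeats 2000000 in
theorem stmt0 (Ω : Set ℂ) (hΩo : IsOpen Ω) (hΩc : IsConnected Ω)
    (w : ℂ → ℝ)
    (hw2 : LocallyIntegrableOn (fun z => (w z) ^ 2) Ω volume)
    (hw1 : LocallyIntegrableOn w Ω volume)
    (hnn : ∀ᵐ z ∂volume, z ∈ Ω → 0 ≤ w z)
    (C₀ : ℝ) (hC₀ : 0 < C₀)
    (hRH : ∀ z₀ : ℂ, ∀ r : ℝ, 0 < r → ball z₀ (2 * r) ⊆ Ω →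
      Real.sqrt ((1 / r ^ 2) * ∫ z in ball z₀ r, (w z) ^ 2) ≤
        (C₀ / r ^ 2) * ∫ z in ball z₀ r, w z) :
    (∀ᵐ z ∂volume, z ∈ Ω → w z = 0) ∨ (∀ᵐ z ∂volume, z ∈ Ω → 0 < w z) := by
  classical
  set S : Set ℂ :=
    {z : ℂ | ∃ ρ > 0, ball z ρ ⊆ Ω ∧ ∀ᵐ z' ∂volume, z' ∈ ball z ρ → w z' = 0} with hSdef
  have hSopen : IsOpen S := by
    rw [Metric.isOpen_iff]
    rintro z ⟨ρ, hρ, hsub, hae⟩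
    refine ⟨ρ, hρ, fun y hy => ?_⟩
    have hd : 0 < ρ - dist y z := by
      rw [mem_ball] at hy; linarith
    have hsub2 : ball y (ρ - dist y z) ⊆ ball z ρ := by
      apply ball_subset_ball'
      linarith
    exact ⟨ρ - dist y z, hd, hsub2.trans hsub, by
      filter_upwards [hae] with x h hx
      exact h (hsub2 hx)⟩
  by_cases hne : (Ω ∩ S).Nonempty
  · -- the zero set propagates to all of Ω
    left
    have hπ := Real.pi_pos
    set η := 1 / (3 * Real.pi * C₀ ^ 2 + 1) with hη
    have hη0 : 0 < η := by positivity
    have hη1 : η ≤ 1 := by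
      rw [hη, div_le_one (by positivity)]
      nlinarith
    have hηeq : η * (3 * Real.pi * C₀ ^ 2 + 1) = 1 := by
      rw [hη]; field_simp
    have hclosure : closure S ∩ Ω ⊆ S := by
      rintro z ⟨hzc, hzΩ⟩
      obtain ⟨ε, hε, hεΩ⟩ := Metric.isOpen_iff.1 hΩo z hzΩ
      set R := ε / 20 with hR
      have hR0 : 0 < R := by positivity
      obtain ⟨a, haS, haz⟩ := Metric.mem_closure_iff.1 hzc R hR0
      obtain ⟨ρ₀, hρ₀, hρ₀Ω, hρ₀ae⟩ := haS
      set ρ₁ := min ρ₀ R with hρ₁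
      have hρ₁0 : 0 < ρ₁ := lt_min hρ₀ hR0
      have hρ₁R : ρ₁ ≤ R := min_le_right _ _
      have hballs : ∀ t : ℝ, t ≤ 10 * R → ball a t ⊆ Ω := by
        intro t ht x hx
        apply hεΩ
        rw [mem_ball] at hx ⊢
        calc dist x z ≤ dist x a + dist a z := dist_triangle _ _ _
          _ < t + R := by
              rw [dist_comm a z]; exact add_lt_add hx haz
          _ ≤ 11 * R := by linarith
          _ < ε := by rw [hR]; linarith
      have key : ∀ n : ℕ,
          ∀ᵐ z' ∂volume, z' ∈ ball a (min (ρ₁ * (1 + η) ^ n) ((1 + η) * R)) → w z' = 0 := by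
        intro n
        induction n with
        | zero =>
          have hmin : min (ρ₁ * (1 + η) ^ 0) ((1 + η) * R) = ρ₁ := by
            rw [pow_zero, mul_one]
            exact min_eq_left (hρ₁R.trans (by nlinarith))
          rw [hmin]
          filter_upwards [hρ₀ae] with x h hx
          exact h (ball_subset_ball (min_le_left _ _) hx)
        | succ n ih =>
          set m := min (ρ₁ * (1 + η) ^ n) ((1 + η) * R) with hm
          have hpow : (0:ℝ) < (1 + η) ^ n := by positivity
          have hm0 : 0 < m := lt_min (by positivity) (by nlinarith)
          have hmR : m ≤ 2 * R := (min_le_right _ _).trans (by nlinarith)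
          have hsub : ball a (2 * (m * (1 + η))) ⊆ Ω := by
            apply hballs
            nlinarith
          have hcond : C₀ ^ 2 * (((m * (1 + η)) ^ 2 - m ^ 2) * Real.pi) < (m * (1 + η)) ^ 2 := by
            have h1 : 3 * Real.pi * C₀ ^ 2 * η = 1 - η := by nlinarith
            have h2 : ((m * (1 + η)) ^ 2 - m ^ 2) = m ^ 2 * (2 * η + η ^ 2) := by ring
            nlinarith [sq_nonneg m, mul_pos hm0 hm0, sq_nonneg η,
              mul_pos (mul_pos hπ (pow_pos hC₀ 2)) hη0,
              mul_nonneg (mul_nonneg (mul_nonneg hπ.le (sq_nonneg C₀)) hη0.le)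
                (mul_pos hm0 hm0).le]
          have hgrow := grow hw2 hw1 hnn hC₀ hRH hm0
            (show m < m * (1 + η) by nlinarith) hcond hsub ih
          have hle : min (ρ₁ * (1 + η) ^ (n + 1)) ((1 + η) * R) ≤ m * (1 + η) := by
            rcases le_total (ρ₁ * (1 + η) ^ n) ((1 + η) * R) with hc | hc
            · have hmeq : m = ρ₁ * (1 + η) ^ n := min_eq_left hc
              calc min (ρ₁ * (1 + η) ^ (n + 1)) ((1 + η) * R)
                  ≤ ρ₁ * (1 + η) ^ (n + 1) := min_le_left _ _
                _ = m * (1 + η) := by rw [hmeq]; ring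
            · have hmeq : m = (1 + η) * R := min_eq_right hc
              calc min (ρ₁ * (1 + η) ^ (n + 1)) ((1 + η) * R)
                  ≤ (1 + η) * R := min_le_right _ _
                _ = m := hmeq.symm
                _ ≤ m * (1 + η) := by nlinarith
          filter_upwards [hgrow] with x h hx
          exact h (ball_subset_ball hle hx)
      -- choose n large enough
      obtain ⟨n, hn⟩ := pow_unbounded_of_one_lt ((1 + η) * R / ρ₁)
        (show (1:ℝ) < 1 + η by linarith)
      have hminR : min (ρ₁ * (1 + η) ^ n) ((1 + η) * R) = (1 + η) * R := by
        apply min_eq_right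
        rw [div_lt_iff₀ hρ₁0] at hn
        nlinarith
      have hkey := key n
      rw [hminR] at hkey
      have hdz : dist z a < R := haz
      refine ⟨(1 + η) * R - dist z a, by nlinarith, ?_, ?_⟩
      · have : ball z ((1 + η) * R - dist z a) ⊆ ball a ((1 + η) * R) := by
          apply ball_subset_ball'
          linarith
        exact this.trans (hballs _ (by nlinarith))
      · have hsub2 : ball z ((1 + η) * R - dist z a) ⊆ ball a ((1 + η) * R) := by
          apply ball_subset_ball'
          linarith
        filter_upwards [hkey] with x h hx
        exact h (hsub2 hx)
    have hΩS : Ω ⊆ S :=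
      hΩc.isPreconnected.subset_of_closure_inter_subset hSopen hne hclosure
    -- conclude : w = 0 a.e. on Ω
    rw [MeasureTheory.ae_iff]
    apply measure_mono_null
      (show {z | ¬(z ∈ Ω → w z = 0)} ⊆ {z | z ∈ Ω ∧ w z ≠ 0} from fun z hz => by
        rw [Set.mem_setOf_eq, _root_.not_imp] at hz
        exact hz)
    · apply measure_null_of_locally_null
      intro x hx
      obtain ⟨ρ, hρ0, hρΩ, hae⟩ := hΩS hx.1
      refine ⟨{z | z ∈ Ω ∧ w z ≠ 0} ∩ ball x ρ,
        inter_mem_nhdsWithin _ (ball_mem_nhds _ hρ0), ?_⟩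
      apply measure_mono_null
        (show {z | z ∈ Ω ∧ w z ≠ 0} ∩ ball x ρ ⊆ {z | ¬(z ∈ ball x ρ → w z = 0)} from
          fun z hz hc => hz.1.2 (hc hz.2))
      exact MeasureTheory.ae_iff.1 hae
  · -- positivity a.e.
    right
    by_contra hpos
    apply hne
    have hm : AEStronglyMeasurable w (volume.restrict Ω) := hw1.aestronglyMeasurable
    obtain ⟨g, hgm, hgeq⟩ := hm
    have heq : ∀ᵐ z ∂volume, z ∈ Ω → w z = g z :=
      (ae_restrict_iff' hΩo.measurableSet).1 hgeq
    set Z := Ω ∩ g ⁻¹' {0} with hZ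
    have hgmeas : MeasurableSet (g ⁻¹' {0}) :=
      hgm.measurable (measurableSet_singleton (0 : ℝ))
    have hZm : MeasurableSet Z := hΩo.measurableSet.inter hgmeas
    have hZ0 : ∀ᵐ z ∂volume, z ∈ Z → w z = 0 := by
      filter_upwards [heq] with z hz hzZ
      rw [hz hzZ.1]
      exact hzZ.2
    have hZpos : volume Z ≠ 0 := by
      intro h0
      apply hpos
      filter_upwards [hnn, heq, measure_eq_zero_iff_ae_notMem.1 h0] with z h1 h2 h3 hzΩ
      rcases (h1 hzΩ).lt_or_eq with h | h
      · exact h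
      · exact absurd ⟨hzΩ, show g z ∈ ({0}:Set ℝ) by rw [Set.mem_singleton_iff, ← h2 hzΩ, ← h]⟩ h3
    -- Lebesgue density point of Z
    set A := {x : ℂ | Filter.Tendsto
        (fun r => volume (Z ∩ closedBall x r) / volume (closedBall x r))
        (nhdsWithin 0 (Set.Ioi 0)) (nhds (Z.indicator 1 x))} with hA
    have hAc : volume Aᶜ = 0 := by
      have := Besicovitch.ae_tendsto_measure_inter_div_of_measurableSet volume hZm
      rw [MeasureTheory.ae_iff] at this
      exact this
    have hZA : volume (Z ∩ A) ≠ 0 := by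
      intro h
      apply hZpos
      apply measure_mono_null (show Z ⊆ (Z ∩ A) ∪ Aᶜ from fun z hz => by
        by_cases hzA : z ∈ A
        · exact Or.inl ⟨hz, hzA⟩
        · exact Or.inr hzA)
      exact measure_union_null h hAc
    obtain ⟨x₀, hx₀Z, hx₀A⟩ := nonempty_of_measure_ne_zero hZA
    have hx₀Ω : x₀ ∈ Ω := hx₀Z.1
    have htend : Filter.Tendsto
        (fun r => volume (Z ∩ closedBall x₀ r) / volume (closedBall x₀ r))
        (nhdsWithin 0 (Set.Ioi 0)) (nhds 1) := by
      have := hx₀A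
      rwa [hA, Set.mem_setOf_eq, Set.indicator_of_mem hx₀Z, Pi.one_apply] at this
    have hπ := Real.pi_pos
    set δ := 1 / (Real.pi * C₀ ^ 2 + 1) with hδ
    have hδ0 : 0 < δ := by positivity
    have hδ1 : δ ≤ 1 := by
      rw [hδ, div_le_one (by positivity)]
      nlinarith
    have hc1 : (1 : ENNReal) - ENNReal.ofReal δ < 1 :=
      ENNReal.sub_lt_self ENNReal.one_ne_top one_ne_zero
        (by simpa using (ENNReal.ofReal_pos.2 hδ0).ne')
    obtain ⟨ε, hε0, hεΩ⟩ := Metric.isOpen_iff.1 hΩo x₀ hx₀Ω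
    have hev1 := htend.eventually (eventually_gt_nhds hc1)
    have hev2 : ∀ᶠ r : ℝ in nhdsWithin 0 (Set.Ioi 0), r < ε / 2 :=
      eventually_nhdsWithin_of_eventually_nhds (gt_mem_nhds (by positivity))
    have hev3 : ∀ᶠ r : ℝ in nhdsWithin 0 (Set.Ioi 0), r ∈ Set.Ioi (0:ℝ) :=
      eventually_mem_nhdsWithin
    obtain ⟨r, hr1, hrε, hr0'⟩ := (hev1.and (hev2.and hev3)).exists
    have hr0 : 0 < r := hr0'
    have hballΩ : ball x₀ (2 * r) ⊆ Ω := by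
      intro x hx
      apply hεΩ
      rw [mem_ball] at hx ⊢
      linarith
    -- quantitative smallness of the complement of Z in the ball
    set b := volume (closedBall x₀ r) with hbdef
    have hb : b = ENNReal.ofReal r ^ 2 * NNReal.pi := Complex.volume_closedBall _ _
    have hb0 : b ≠ 0 := by
      rw [hb]
      apply mul_ne_zero
      · exact pow_ne_zero _ (ENNReal.ofReal_pos.2 hr0).ne'
      · simp only [ne_eq, ENNReal.coe_eq_zero]
        intro h
        exact Real.pi_ne_zero (by rw [← NNReal.coe_real_pi, h, NNReal.coe_zero])
    have hbt : b ≠ ⊤ := measure_closedBall_lt_top.ne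
    have h2 : (1 - ENNReal.ofReal δ) * b ≤ volume (Z ∩ closedBall x₀ r) :=
      ((ENNReal.lt_div_iff_mul_lt (Or.inl hb0) (Or.inl hbt)).1 hr1).le
    have hdiffeq : volume (closedBall x₀ r \ Z) = b - volume (Z ∩ closedBall x₀ r) := by
      have hset : closedBall x₀ r \ Z = closedBall x₀ r \ (Z ∩ closedBall x₀ r) := by
        ext y; simp [and_comm]
      rw [hset, measure_diff Set.inter_subset_right
        (hZm.inter measurableSet_closedBall).nullMeasurableSet
        ((measure_mono Set.inter_subset_right).trans_lt measure_closedBall_lt_top).ne]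
    have h3 : volume (closedBall x₀ r \ Z) ≤ ENNReal.ofReal δ * b := by
      rw [hdiffeq]
      have step1 : b - volume (Z ∩ closedBall x₀ r) ≤ b - (1 - ENNReal.ofReal δ) * b :=
        tsub_le_tsub_left h2 b
      refine step1.trans ?_
      have hsum : ENNReal.ofReal δ * b + (1 - ENNReal.ofReal δ) * b = b := by
        rw [← add_mul, add_tsub_cancel_of_le (ENNReal.ofReal_le_one.2 hδ1), one_mul]
      rw [tsub_le_iff_right]
      exact le_of_eq hsum.symm
    have h4 : volume (ball x₀ r \ Z) ≤ ENNReal.ofReal δ * b :=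
      (measure_mono (Set.diff_subset_diff_left ball_subset_closedBall)).trans h3
    have h5 : (volume (ball x₀ r \ Z)).toReal ≤ δ * (r ^ 2 * Real.pi) := by
      have hfin : ENNReal.ofReal δ * b ≠ ⊤ := ENNReal.mul_ne_top ENNReal.ofReal_ne_top hbt
      have := ENNReal.toReal_mono hfin h4
      rwa [ENNReal.toReal_mul, ENNReal.toReal_ofReal hδ0.le, hb, ENNReal.toReal_mul,
        ENNReal.toReal_pow, ENNReal.toReal_ofReal hr0.le, ENNReal.coe_toReal,
        NNReal.coe_real_pi] at this
    have hsmall : C₀ ^ 2 * (volume (ball x₀ r \ Z)).toReal < r ^ 2 := by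
      have hδeq : δ * (Real.pi * C₀ ^ 2 + 1) = 1 := by rw [hδ]; field_simp
      have h6 : C₀ ^ 2 * (volume (ball x₀ r \ Z)).toReal ≤ C₀ ^ 2 * (δ * (r ^ 2 * Real.pi)) :=
        mul_le_mul_of_nonneg_left h5 (sq_nonneg _)
      have h7 : C₀ ^ 2 * (δ * (r ^ 2 * Real.pi)) < r ^ 2 := by
        nlinarith [mul_pos (mul_pos hπ (pow_pos hC₀ 2)) hδ0, pow_pos hr0 2,
          mul_pos (pow_pos hr0 2) hδ0]
      linarith
    have hzero := zero_on_ball hw2 hw1 hnn hC₀ hRH hr0 hballΩ hZm hZ0 hsmall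
    exact ⟨x₀, hx₀Ω, r, hr0, (ball_subset_ball (by linarith)).trans hballΩ, hzero⟩
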